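/- Let ∅ ≠ I ⊆ {1,…,n−1}, set Ext(I) = I ∪ nonAdj(I), and let K_I(R) be the subgroup of SL_n(R) generated by all e_{ij}(r) with i < j not Ext(I)-connected and r ∈ R. Then K_I(R) is a normal subgroup of P_I(R), K_I(R) ∩ LE_I(R) = {1}, and K_I(R)·LE_I(R) = P_I(R); in particular, the natural projection realizes the extended Levi factor LE_I(R) as a retract of P_I(R) with kernel K_I(R). -/

import Mathlib

/-- A group is finitely presented if it is isomorphic to the quotient of a
finitely generated free group by the normal closure of a finite set. -/
def IsFinitelyPresented (G : Type*) [Group G] : Prop :=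
  ∃ (m : ℕ) (S : Finset (FreeGroup (Fin m))),
    Nonempty ((FreeGroup (Fin m) ⧸ Subgroup.normalClosure (S : Set (FreeGroup (Fin m)))) ≃* G)

/-- The elementary matrix `1 + r·E i j` as an element of `SL_n(R)`. -/
def elemMat {n : ℕ} {R : Type*} [CommRing R] (i j : Fin n) (hij : i ≠ j) (r : R) :
    Matrix.SpecialLinearGroup (Fin n) R :=
  ⟨Matrix.transvection i j r, Matrix.det_transvection_of_ne i j hij r⟩

/-- The set of diagonal matrices in `SL_n(R)`. -/
def diagMats (n : ℕ) (R : Type*) [CommRing R] :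
    Set (Matrix.SpecialLinearGroup (Fin n) R) :=
  {g | (g : Matrix (Fin n) (Fin n) R).IsDiag}

/-- For (0-based) indices `i < j` in `Fin n`, the (1-based) pair `(i+1, j+1)` is
`I`-connected if every simple-root index `k` with `i+1 ≤ k ≤ j` lies in `I`. -/
def IConn {n : ℕ} (I : Set ℕ) (i j : Fin n) : Prop :=
  ∀ k : ℕ, i.val + 1 ≤ k → k ≤ j.val → k ∈ I

/-- Upper elementary matrices `e_{ij}(r)` with `i < j` a `J`-connected pair. -/
def upperElems (n : ℕ) (R : Type*) [CommRing R] (J : Set ℕ) :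
    Set (Matrix.SpecialLinearGroup (Fin n) R) :=
  {g | ∃ (i j : Fin n) (h : i < j) (r : R), IConn J i j ∧ g = elemMat i j (ne_of_lt h) r}

/-- All upper elementary matrices `e_{ij}(r)`, `i < j`. -/
def allUpperElems (n : ℕ) (R : Type*) [CommRing R] :
    Set (Matrix.SpecialLinearGroup (Fin n) R) :=
  {g | ∃ (i j : Fin n) (h : i < j) (r : R), g = elemMat i j (ne_of_lt h) r}

/-- Lower elementary matrices `e_{ji}(r)` with `i < j` an `I`-connected pair. -/
def lowerElems (n : ℕ) (R : Type*) [CommRing R] (I : Set ℕ) :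
    Set (Matrix.SpecialLinearGroup (Fin n) R) :=
  {g | ∃ (i j : Fin n) (h : i < j) (r : R), IConn I i j ∧ g = elemMat j i (ne_of_gt h) r}

/-- The standard parabolic subgroup `P_I(R) ≤ SL_n(R)`. -/
def parabolic (n : ℕ) (R : Type*) [CommRing R] (I : Set ℕ) :
    Subgroup (Matrix.SpecialLinearGroup (Fin n) R) :=
  Subgroup.closure (diagMats n R ∪ allUpperElems n R ∪ lowerElems n R I)

/-- The Levi factor `L_I(R) ≤ SL_n(R)`. -/
def levi (n : ℕ) (R : Type*) [CommRing R] (I : Set ℕ) :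
    Subgroup (Matrix.SpecialLinearGroup (Fin n) R) :=
  Subgroup.closure (diagMats n R ∪ upperElems n R I ∪ lowerElems n R I)

/-- `Adj(I)`: simple-root indices not in `I` adjacent to an element of `I`. -/
def adjSet (n : ℕ) (I : Set ℕ) : Set ℕ :=
  {k | k ∈ Set.Icc 1 (n - 1) ∧ k ∉ I ∧ (k - 1 ∈ I ∨ k + 1 ∈ I)}

/-- `nonAdj(I)`: simple-root indices neither in `I` nor adjacent to `I`. -/
def nonAdjSet (n : ℕ) (I : Set ℕ) : Set ℕ :=
  Set.Icc 1 (n - 1) \ (I ∪ adjSet n I)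

/-- The extended Levi factor `LE_I(R)` (for `I ≠ ∅`): generated by the Levi factor
together with all `e_{ij}(r)`, `i < j` a `nonAdj(I)`-connected pair. -/
def extLevi (n : ℕ) (R : Type*) [CommRing R] (I : Set ℕ) :
    Subgroup (Matrix.SpecialLinearGroup (Fin n) R) :=
  Subgroup.closure (diagMats n R ∪ upperElems n R I ∪ lowerElems n R I ∪
    upperElems n R (nonAdjSet n I))

open scoped Pointwise

/-- The subgroup K_I(R) generated by all `e_{ij}(r)` with `i < j` not
`Ext(I) = I ∪ nonAdj(I)`-connected. -/
def kerK (n : ℕ) (R : Type*) [CommRing R] (I : Set ℕ) :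
    Subgroup (Matrix.SpecialLinearGroup (Fin n) R) :=
  Subgroup.closure
    {g | ∃ (i j : Fin n) (h : i < j) (r : R),
      ¬ IConn (I ∪ nonAdjSet n I) i j ∧ g = elemMat i j (ne_of_lt h) r}

open Matrix


/-! ### Block counting function -/

open Classical in
noncomputable def bmap (E : Set ℕ) : ℕ → ℕ
  | 0 => 0
  | k+1 => bmap E k + (if k+1 ∈ E then 0 else 1)

open Classical in
lemma bmap_succ (E : Set ℕ) (k : ℕ) :
    bmap E (k+1) = bmap E k + (if k+1 ∈ E then 0 else 1) := rfl

lemma bmap_mono (E : Set ℕ) : Monotone (bmap E) := by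
  apply monotone_nat_of_le_succ
  intro k
  rw [bmap_succ]
  split <;> omega

lemma conn_iff_bmap (E : Set ℕ) {i j : ℕ} (h : i ≤ j) :
    (∀ k, i+1 ≤ k → k ≤ j → k ∈ E) ↔ bmap E i = bmap E j := by
  induction j, h using Nat.le_induction with
  | base => exact ⟨fun _ => rfl, fun _ k h1 h2 => absurd (h1.trans h2) (by omega)⟩
  | succ j hij IH =>
    have hm1 : bmap E i ≤ bmap E j := bmap_mono E hij
    constructor
    · intro hc
      have h1 : bmap E i = bmap E j := IH.mp (fun k hk1 hk2 => hc k hk1 (by omega))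
      have h2 : j+1 ∈ E := hc (j+1) (by omega) le_rfl
      rw [bmap_succ, if_pos h2]; omega
    · intro he k hk1 hk2
      have hj1 : j+1 ∈ E := by
        by_contra hmem
        rw [bmap_succ, if_neg hmem] at he; omega
      rcases Nat.lt_or_ge k (j+1) with hlt | hge
      · have h3 : bmap E i = bmap E j := by rw [bmap_succ, if_pos hj1] at he; omega
        exact IH.mpr h3 k hk1 (by omega)
      · have : k = j+1 := by omega
        subst this; exact hj1

lemma bmap_lt_of_not_conn (E : Set ℕ) {i j : ℕ} (h : i ≤ j)
    (hnc : ¬ ∀ k, i+1 ≤ k → k ≤ j → k ∈ E) : bmap E i < bmap E j :=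
  lt_of_le_of_ne (bmap_mono E h) (fun he => hnc ((conn_iff_bmap E h).mpr he))


section Blocks

variable {n : ℕ} {R : Type*} [CommRing R] (E : Set ℕ)

/-- Block-diagonal matrices in `SL_n(R)` with respect to the block function `bmap E`. -/
def blockDiagSG (n : ℕ) (R : Type*) [CommRing R] (E : Set ℕ) :
    Subgroup (Matrix.SpecialLinearGroup (Fin n) R) where
  carrier := {g | ∀ i j : Fin n, bmap E i.val ≠ bmap E j.val →
    (g : Matrix (Fin n) (Fin n) R) i j = 0}
  one_mem' := by
    intro i j hij
    have : i ≠ j := fun h => hij (by rw [h])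
    simp [Matrix.SpecialLinearGroup.coe_one, Matrix.one_apply_ne this]
  mul_mem' := by
    intro a b ha hb i j hij
    rw [Matrix.SpecialLinearGroup.coe_mul, Matrix.mul_apply]
    apply Finset.sum_eq_zero
    intro k _
    by_cases hk : bmap E k.val = bmap E i.val
    · rw [hb k j (hk ▸ hij), mul_zero]
    · rw [ha i k (fun h => hk h.symm), zero_mul]
  inv_mem' := by
    intro a ha i j hij
    set A : Matrix (Fin n) (Fin n) R := ↑a with hA
    set B : Matrix (Fin n) (Fin n) R := ↑(a⁻¹) with hB
    have hAB : A * B = 1 := by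
      rw [hA, hB, ← Matrix.SpecialLinearGroup.coe_mul, mul_inv_cancel,
        Matrix.SpecialLinearGroup.coe_one]
    have hBA : B * A = 1 := by
      rw [hA, hB, ← Matrix.SpecialLinearGroup.coe_mul, inv_mul_cancel,
        Matrix.SpecialLinearGroup.coe_one]
    set P : Matrix (Fin n) (Fin n) R :=
      Matrix.diagonal (fun k : Fin n => if bmap E k.val = bmap E i.val then (1:R) else 0) with hP
    have hcomm : A * P = P * A := by
      ext u v
      rw [hP, Matrix.mul_diagonal, Matrix.diagonal_mul]
      by_cases h1 : bmap E v.val = bmap E i.val <;>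
        by_cases h2 : bmap E u.val = bmap E i.val
      · rw [if_pos h1, if_pos h2, one_mul, mul_one]
      · have h0 : A u v = 0 := ha u v (fun h => h2 (h.trans h1))
        rw [if_pos h1, if_neg h2, h0, mul_one, zero_mul]
      · have h0 : A u v = 0 := ha u v (fun h => h1 (h ▸ h2))
        rw [if_neg h1, if_pos h2, h0, mul_zero, mul_zero]
      · rw [if_neg h1, if_neg h2, mul_zero, zero_mul]
    have hBP : B * P = P * B := by
      calc B * P = B * P * (A * B) := by rw [hAB, mul_one]
      _ = B * (P * A) * B := by noncomm_ring
      _ = B * (A * P) * B := by rw [hcomm]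
      _ = (B * A) * (P * B) := by noncomm_ring
      _ = P * B := by rw [hBA, one_mul]
    have hfin : B i j = B i j * (if bmap E j.val = bmap E i.val then (1:R) else 0) := by
      calc B i j = (if bmap E i.val = bmap E i.val then (1:R) else 0) * B i j := by
            rw [if_pos rfl, one_mul]
      _ = (P * B) i j := by rw [hP, Matrix.diagonal_mul]
      _ = (B * P) i j := by rw [hBP]
      _ = B i j * (if bmap E j.val = bmap E i.val then (1:R) else 0) := by
            rw [hP, Matrix.mul_diagonal]
    rw [if_neg (fun h => hij h.symm), mul_zero] at hfin
    exact hfin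

/-- Block-strictly-upper unipotent matrices in `SL_n(R)`. -/
def blockUpperSG (n : ℕ) (R : Type*) [CommRing R] (E : Set ℕ) :
    Subgroup (Matrix.SpecialLinearGroup (Fin n) R) where
  carrier := {g | ∀ i j : Fin n, ¬ bmap E i.val < bmap E j.val →
    ((g : Matrix (Fin n) (Fin n) R) - 1) i j = 0}
  one_mem' := by
    intro i j _
    simp [Matrix.SpecialLinearGroup.coe_one]
  mul_mem' := by
    intro a b ha hb i j hij
    set A : Matrix (Fin n) (Fin n) R := ↑a
    set B : Matrix (Fin n) (Fin n) R := ↑b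
    have key : A * B - 1 = (A - 1) * (B - 1) + (A - 1) + (B - 1) := by noncomm_ring
    rw [Matrix.SpecialLinearGroup.coe_mul]
    show (A * B - 1) i j = 0
    rw [key]
    have hab : ((A - 1) * (B - 1)) i j = 0 := by
      rw [Matrix.mul_apply]
      apply Finset.sum_eq_zero
      intro k _
      by_cases hk : bmap E i.val < bmap E k.val
      · rw [hb k j (fun h => hij (hk.trans h)), mul_zero]
      · rw [ha i k hk, zero_mul]
    rw [Matrix.add_apply, Matrix.add_apply, hab, ha i j hij, hb i j hij, add_zero, add_zero]
  inv_mem' := by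
    intro g hg i j hij
    set A : Matrix (Fin n) (Fin n) R := ↑g with hA
    set B : Matrix (Fin n) (Fin n) R := ↑(g⁻¹) with hB
    have hBA : B * A = 1 := by
      rw [hA, hB, ← Matrix.SpecialLinearGroup.coe_mul, inv_mul_cancel,
        Matrix.SpecialLinearGroup.coe_one]
    set a : Matrix (Fin n) (Fin n) R := A - 1 with ha
    set b : Matrix (Fin n) (Fin n) R := B - 1 with hb
    have h1 : b * a = 1 - B - A + 1 := by
      rw [hb, ha]
      calc (B-1)*(A-1) = B*A - B - A + 1 := by noncomm_ring
      _ = 1 - B - A + 1 := by rw [hBA]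
    have hrec : b = -a - b * a := by rw [h1, hb, ha]; noncomm_ring
    have main : ∀ v : ℕ, ∀ i j : Fin n, bmap E j.val = v →
        ¬ bmap E i.val < bmap E j.val → b i j = 0 := by
      intro v
      induction v using Nat.strong_induction_on with
      | _ v ih =>
        intro i j hv hij
        have ha0 : a i j = 0 := hg i j hij
        have hba : (b * a) i j = 0 := by
          rw [Matrix.mul_apply]
          apply Finset.sum_eq_zero
          intro k _
          by_cases hk : bmap E k.val < bmap E j.val
          · rw [ih (bmap E k.val) (by omega) i k rfl (fun h => hij (by omega)), zero_mul]
          · have h0 : a k j = 0 := hg k j hk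
            rw [h0, mul_zero]
        have : b i j = (-a - b * a) i j := by rw [← hrec]
        rw [this, Matrix.sub_apply, Matrix.neg_apply, ha0, hba, neg_zero, sub_zero]
    exact main (bmap E j.val) i j rfl hij

end Blocks


section Transvections

variable {n : ℕ} {R : Type*} [CommRing R]

lemma trans_comm (a b i j : Fin n) (hbi : b ≠ i) (haj : a ≠ j) (s r : R) :
    transvection a b s * transvection i j r = transvection i j r * transvection a b s := by
  have hja : j ≠ a := haj.symm
  simp only [transvection, add_mul, mul_add, one_mul, mul_one,
    Matrix.single_mul_single_of_ne, hbi, hja, ne_eq, not_false_eq_true, add_zero]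
  abel

lemma trans_bi (a i j : Fin n) (haj : a ≠ j) (hij : i ≠ j) (s r : R) :
    transvection a i s * transvection i j r =
      (transvection i j r * transvection a j (s*r)) * transvection a i s := by
  have hja : j ≠ a := haj.symm
  simp only [transvection, add_mul, mul_add, one_mul, mul_one,
    Matrix.single_mul_single_same, Matrix.single_mul_single_of_ne, hja, ne_eq,
    not_false_eq_true, add_zero]
  abel

lemma trans_aj (b i j : Fin n) (hbi : b ≠ i) (hbj : b ≠ j) (hij : i ≠ j) (s r : R) :
    transvection j b s * transvection i j r =
      (transvection i j r * transvection i b (-(r*s))) * transvection j b s := by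
  have hji : j ≠ i := hij.symm
  have hjb : j ≠ b := hbj.symm
  have hcancel : Matrix.single i b (-(r*s)) + Matrix.single i b (r*s)
      = (0 : Matrix (Fin n) (Fin n) R) := by
    rw [← Matrix.single_add, neg_add_cancel, Matrix.single_zero]
  simp only [transvection, add_mul, mul_add, one_mul, mul_one,
    Matrix.single_mul_single_same, Matrix.single_mul_single_of_ne, hbi, hji, hjb, ne_eq,
    not_false_eq_true, add_zero, mul_zero, zero_mul]
  have h2 : Matrix.single i b (-(r*s)) * Matrix.single j b s
      = (0 : Matrix (Fin n) (Fin n) R) := Matrix.single_mul_single_of_ne (c := -(r*s)) i b j hbj s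
  rw [h2, add_zero]
  rw [show (1 : Matrix (Fin n) (Fin n) R) + Matrix.single i j r +
      Matrix.single i b (-(r*s)) +
      (Matrix.single j b s + Matrix.single i b (r*s)) =
      1 + Matrix.single i j r + Matrix.single j b s +
      (Matrix.single i b (-(r*s)) + Matrix.single i b (r*s)) from by abel,
    hcancel, add_zero]
  abel

lemma trans_inv_mat (a b : Fin n) (hab : a ≠ b) (s : R) :
    transvection a b s * transvection a b (-s) = 1 := by
  rw [Matrix.transvection_mul_transvection_same a b hab, add_neg_cancel, Matrix.transvection_zero]

end Transvections


section DiagStd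

variable {n : ℕ} {R : Type*} [CommRing R]

lemma isdiag_mul_std {A : Matrix (Fin n) (Fin n) R} (hA : A.IsDiag) (i j : Fin n) (c : R) :
    A * Matrix.single i j c = Matrix.single i j (A i i * c) := by
  ext u v
  simp only [Matrix.mul_apply, Matrix.single, Matrix.of_apply]
  rw [Finset.sum_eq_single i (fun k _ hk => by simp [Ne.symm hk]) (by simp)]
  by_cases hv : j = v
  · subst hv
    simp only [and_true, true_and, if_pos rfl]
    by_cases hu : i = u
    · subst hu; simp
    · have h0 : A u i = 0 := hA (fun h => hu h.symm)
      simp [h0, hu]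
  · simp [hv]

lemma std_mul_isdiag {A : Matrix (Fin n) (Fin n) R} (hA : A.IsDiag) (i j : Fin n) (c : R) :
    Matrix.single i j c * A = Matrix.single i j (c * A j j) := by
  ext u v
  simp only [Matrix.mul_apply, Matrix.single, Matrix.of_apply]
  rw [Finset.sum_eq_single j (fun k _ hk => by simp [Ne.symm hk]) (by simp)]
  by_cases hu : i = u
  · subst hu
    simp only [true_and, if_pos rfl]
    by_cases hv : j = v
    · subst hv; simp
    · have h0 : A j v = 0 := hA (fun h => hv h)
      simp [h0, hv]
  · simp [hu]

end DiagStd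

section MainAux

variable {R : Type*} [CommRing R] {n : ℕ}

lemma elemMat_coe (i j : Fin n) (hij : i ≠ j) (r : R) :
    (elemMat i j hij r : Matrix (Fin n) (Fin n) R) = Matrix.transvection i j r := rfl

lemma elemMat_inv (i j : Fin n) (hij : i ≠ j) (s : R) :
    (elemMat i j hij s)⁻¹ = elemMat i j hij (-s) := by
  apply inv_eq_of_mul_eq_one_right
  apply Subtype.ext
  rw [Matrix.SpecialLinearGroup.coe_mul, elemMat_coe, elemMat_coe,
    Matrix.SpecialLinearGroup.coe_one]
  exact trans_inv_mat i j hij s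

lemma mem_normalizer_of_conj {G : Type*} [Group G] {S : Set G} {g : G}
    (h1 : ∀ s ∈ S, g * s * g⁻¹ ∈ Subgroup.closure S)
    (h2 : ∀ s ∈ S, g⁻¹ * s * g ∈ Subgroup.closure S) :
    g ∈ Subgroup.normalizer (Subgroup.closure S : Set G) := by
  have H : ∀ u : G, (∀ s ∈ S, u * s * u⁻¹ ∈ Subgroup.closure S) →
      ∀ x ∈ Subgroup.closure S, u * x * u⁻¹ ∈ Subgroup.closure S := by
    intro u hu x hx
    induction hx using Subgroup.closure_induction with
    | mem s hs => exact hu s hs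
    | one => simpa using Subgroup.one_mem _
    | mul x y _ _ px py =>
        have hxy : u * (x * y) * u⁻¹ = (u * x * u⁻¹) * (u * y * u⁻¹) := by group
        rw [hxy]; exact Subgroup.mul_mem _ px py
    | inv x _ px =>
        have hxi : u * x⁻¹ * u⁻¹ = (u * x * u⁻¹)⁻¹ := by group
        rw [hxi]; exact Subgroup.inv_mem _ px
  rw [Subgroup.mem_normalizer_iff]
  intro h
  constructor
  · exact fun hh => H g h1 h hh
  · intro hh
    have h3 := H g⁻¹ (by simpa using h2) _ hh
    have e : g⁻¹ * (g * h * g⁻¹) * g⁻¹⁻¹ = h := by group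
    rwa [e] at h3

lemma conj_elem_mem (I : Set ℕ) (a b : Fin n) (hab : a ≠ b) (s : R)
    (hlow : b < a → IConn I b a) :
    ∀ x ∈ {g : Matrix.SpecialLinearGroup (Fin n) R | ∃ (i j : Fin n) (h : i < j) (r : R),
      ¬ IConn (I ∪ nonAdjSet n I) i j ∧ g = elemMat i j (ne_of_lt h) r},
      elemMat a b hab s * x * (elemMat a b hab s)⁻¹ ∈ kerK n R I := by
  rintro x ⟨i, j, hij, r, hnc, rfl⟩
  obtain ⟨m, hm1, hm2, hm3⟩ : ∃ m : ℕ, i.val + 1 ≤ m ∧ m ≤ j.val ∧ m ∉ I ∪ nonAdjSet n I := by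
    by_contra hcon
    push_neg at hcon
    exact hnc fun k h1 h2 => hcon k h1 h2
  have hijv : i.val < j.val := hij
  by_cases hbi : b = i
  · subst hbi
    have haj : a ≠ j := by
      intro h
      subst h
      rcases lt_or_gt_of_ne hab with h1 | h1
      · exact absurd (h1.trans hij) (lt_irrefl _)
      · exact hnc fun k h1' h2' => Or.inl (hlow h1 k h1' h2')
    have key : a.val < j.val ∧ ¬ IConn (I ∪ nonAdjSet n I) a j := by
      rcases lt_or_gt_of_ne hab with h1 | h1
      · have hav : a.val < b.val := h1
        exact ⟨by omega, fun hc => hnc fun k hk1 hk2 => hc k (by omega) hk2⟩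
      · have hIa := hlow h1
        have hma : a.val < m := by
          by_contra hle
          push_neg at hle
          exact hm3 (Or.inl (hIa m hm1 hle))
        exact ⟨by omega, fun hc => hm3 (hc m (by omega) hm2)⟩
    obtain ⟨hajv, hnc2⟩ := key
    have hajf : a < j := hajv
    have hgx : elemMat a b hab s * elemMat b j (ne_of_lt hij) r =
        (elemMat b j (ne_of_lt hij) r * elemMat a j (ne_of_lt hajf) (s*r)) *
          elemMat a b hab s := by
      apply Subtype.ext
      rw [Matrix.SpecialLinearGroup.coe_mul, Matrix.SpecialLinearGroup.coe_mul,
        Matrix.SpecialLinearGroup.coe_mul]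
      exact trans_bi a b j haj (ne_of_lt hij) s r
    rw [hgx, mul_inv_cancel_right]
    exact mul_mem (Subgroup.subset_closure ⟨b, j, hij, r, hnc, rfl⟩)
      (Subgroup.subset_closure ⟨a, j, hajf, s*r, hnc2, rfl⟩)
  · by_cases haj : a = j
    · subst haj
      have key : i.val < b.val ∧ ¬ IConn (I ∪ nonAdjSet n I) i b := by
        rcases lt_or_gt_of_ne hab with h1 | h1
        · have hav : a.val < b.val := h1
          exact ⟨by omega, fun hc => hm3 (hc m hm1 (by omega))⟩
        · have hIb := hlow h1
          have hmb : m ≤ b.val := by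
            by_contra hgt
            push_neg at hgt
            exact hm3 (Or.inl (hIb m hgt hm2))
          exact ⟨by omega, fun hc => hm3 (hc m hm1 hmb)⟩
      obtain ⟨hibv, hnc2⟩ := key
      have hibf : i < b := hibv
      have hgx : elemMat a b hab s * elemMat i a (ne_of_lt hij) r =
          (elemMat i a (ne_of_lt hij) r * elemMat i b (ne_of_lt hibf) (-(r*s))) *
            elemMat a b hab s := by
        apply Subtype.ext
        rw [Matrix.SpecialLinearGroup.coe_mul, Matrix.SpecialLinearGroup.coe_mul,
          Matrix.SpecialLinearGroup.coe_mul]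
        exact trans_aj b i a hbi (Ne.symm hab) (ne_of_lt hij) s r
      rw [hgx, mul_inv_cancel_right]
      exact mul_mem (Subgroup.subset_closure ⟨i, a, hij, r, hnc, rfl⟩)
        (Subgroup.subset_closure ⟨i, b, hibf, -(r*s), hnc2, rfl⟩)
    · have hgx : elemMat a b hab s * elemMat i j (ne_of_lt hij) r =
          elemMat i j (ne_of_lt hij) r * elemMat a b hab s := by
        apply Subtype.ext
        rw [Matrix.SpecialLinearGroup.coe_mul, Matrix.SpecialLinearGroup.coe_mul]
        exact trans_comm a b i j hbi haj s r
      rw [hgx, mul_inv_cancel_right]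
      exact Subgroup.subset_closure ⟨i, j, hij, r, hnc, rfl⟩

lemma diag_det_aux (d : Matrix.SpecialLinearGroup (Fin n) R) (hd : d ∈ diagMats n R)
    (j : Fin n) :
    (d : Matrix (Fin n) (Fin n) R) j j * (∏ k ∈ Finset.univ.erase j,
      (d : Matrix (Fin n) (Fin n) R) k k) = 1 := by
  have hdiag : (d : Matrix (Fin n) (Fin n) R).IsDiag := hd
  have h1 : Matrix.det (Matrix.diagonal (Matrix.diag (d : Matrix (Fin n) (Fin n) R))) = 1 := by
    rw [Matrix.IsDiag.diagonal_diag hdiag]; exact d.prop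
  rw [Matrix.det_diagonal] at h1
  simp only [Matrix.diag_apply] at h1
  exact (Finset.mul_prod_erase Finset.univ
    (fun k => (d : Matrix (Fin n) (Fin n) R) k k) (Finset.mem_univ j)).trans h1

lemma diag_mul_elem (d : Matrix.SpecialLinearGroup (Fin n) R) (hd : d ∈ diagMats n R)
    (i j : Fin n) (hij : i ≠ j) (r : R) :
    ∃ c : R, d * elemMat i j hij r = elemMat i j hij c * d := by
  have hdiag : (d : Matrix (Fin n) (Fin n) R).IsDiag := hd
  have hdet := diag_det_aux d hd j
  set A : Matrix (Fin n) (Fin n) R := ↑d with hA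
  refine ⟨A i i * r * ∏ k ∈ Finset.univ.erase j, A k k, Subtype.ext ?_⟩
  rw [Matrix.SpecialLinearGroup.coe_mul, Matrix.SpecialLinearGroup.coe_mul,
    elemMat_coe, elemMat_coe, Matrix.transvection, Matrix.transvection,
    mul_add, add_mul, mul_one, one_mul, isdiag_mul_std hdiag, std_mul_isdiag hdiag]
  have hc : (A i i * r * ∏ k ∈ Finset.univ.erase j, A k k) * A j j = A i i * r := by
    calc (A i i * r * ∏ k ∈ Finset.univ.erase j, A k k) * A j j
        = A i i * r * (A j j * ∏ k ∈ Finset.univ.erase j, A k k) := by ring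
      _ = A i i * r := by rw [hdet, mul_one]
  rw [hc, add_comm]

lemma diag_mul_elem' (d : Matrix.SpecialLinearGroup (Fin n) R) (hd : d ∈ diagMats n R)
    (i j : Fin n) (hij : i ≠ j) (r : R) :
    ∃ c : R, d * elemMat i j hij c = elemMat i j hij r * d := by
  have hdiag : (d : Matrix (Fin n) (Fin n) R).IsDiag := hd
  have hdet := diag_det_aux d hd i
  set A : Matrix (Fin n) (Fin n) R := ↑d with hA
  refine ⟨(∏ k ∈ Finset.univ.erase i, A k k) * (r * A j j), Subtype.ext ?_⟩
  rw [Matrix.SpecialLinearGroup.coe_mul, Matrix.SpecialLinearGroup.coe_mul,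
    elemMat_coe, elemMat_coe, Matrix.transvection, Matrix.transvection,
    mul_add, add_mul, mul_one, one_mul, isdiag_mul_std hdiag, std_mul_isdiag hdiag]
  have hc : A i i * ((∏ k ∈ Finset.univ.erase i, A k k) * (r * A j j)) = r * A j j := by
    calc A i i * ((∏ k ∈ Finset.univ.erase i, A k k) * (r * A j j))
        = (A i i * ∏ k ∈ Finset.univ.erase i, A k k) * (r * A j j) := by ring
      _ = r * A j j := by rw [hdet, one_mul]
  rw [hc, add_comm]

lemma purity {I : Set ℕ} {i j : Fin n} (hij : i < j)
    (hc : IConn (I ∪ nonAdjSet n I) i j) :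
    IConn I i j ∨ IConn (nonAdjSet n I) i j := by
  have hijv : i.val < j.val := hij
  have step : ∀ k : ℕ, i.val + 1 ≤ k → k + 1 ≤ j.val → (k ∈ I ↔ k + 1 ∈ I) := by
    intro k hk1 hk2
    have hkE : k ∈ I ∪ nonAdjSet n I := hc k hk1 (by omega)
    have hk1E : k + 1 ∈ I ∪ nonAdjSet n I := hc (k+1) (by omega) hk2
    constructor
    · intro hkI
      by_contra hk1I
      have hna : k + 1 ∈ nonAdjSet n I := hk1E.resolve_left hk1I
      obtain ⟨hIcc, hnot⟩ := hna
      exact hnot (Or.inr ⟨hIcc, hk1I, Or.inl (by simpa using hkI)⟩)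
    · intro hk1I
      by_contra hkI
      have hna : k ∈ nonAdjSet n I := hkE.resolve_left hkI
      obtain ⟨hIcc, hnot⟩ := hna
      exact hnot (Or.inr ⟨hIcc, hkI, Or.inr hk1I⟩)
  have chain : ∀ k : ℕ, i.val + 1 ≤ k → k ≤ j.val → (k ∈ I ↔ i.val + 1 ∈ I) := by
    intro k hk
    induction k, hk using Nat.le_induction with
    | base => exact fun _ => Iff.rfl
    | succ k hk IH => exact fun h2 => ((step k hk h2).symm).trans (IH (by omega))
  have hbase : i.val + 1 ∈ I ∪ nonAdjSet n I := hc (i.val+1) le_rfl (by omega)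
  rcases hbase with hbI | hbN
  · left; exact fun k h1 h2 => (chain k h1 h2).mpr hbI
  · right
    have hbnotI : i.val + 1 ∉ I := by
      obtain ⟨hIcc, hnot⟩ := hbN
      exact fun h => hnot (Or.inl h)
    intro k h1 h2
    exact (hc k h1 h2).resolve_left (fun hkI => hbnotI ((chain k h1 h2).mp hkI))

end MainAux

/-- For ∅ ≠ I ⊆ {1,…,n−1}: K_I(R) is a normal subgroup of P_I(R), it intersects the
extended Levi factor LE_I(R) trivially, and K_I(R)·LE_I(R) = P_I(R); in particular
LE_I(R) is a retract of P_I(R) with kernel K_I(R). -/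
theorem kerK_normal_complement
    {R : Type*} [CommRing R] {n : ℕ} (hn : 2 ≤ n)
    (I : Set ℕ) (hI : I ⊆ Set.Icc 1 (n - 1)) (hne : I.Nonempty) :
    kerK n R I ≤ parabolic n R I ∧
    (∀ p ∈ parabolic n R I, ∀ x ∈ kerK n R I, p * x * p⁻¹ ∈ kerK n R I) ∧
    kerK n R I ⊓ extLevi n R I = ⊥ ∧
    (kerK n R I : Set (Matrix.SpecialLinearGroup (Fin n) R)) *
      (extLevi n R I : Set (Matrix.SpecialLinearGroup (Fin n) R)) =
      (parabolic n R I : Set (Matrix.SpecialLinearGroup (Fin n) R)) := by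
    classical
    set Ext : Set ℕ := I ∪ nonAdjSet n I with hExt
    -- K ≤ P
    have hKP : kerK n R I ≤ parabolic n R I := by
      apply (Subgroup.closure_le _).mpr
      rintro g ⟨i, j, h, r, _, rfl⟩
      exact Subgroup.subset_closure (Or.inl (Or.inr ⟨i, j, h, r, rfl⟩))
    -- LE ≤ P
    have hLP : extLevi n R I ≤ parabolic n R I := by
      apply (Subgroup.closure_le _).mpr
      rintro g (((hg | hg) | hg) | hg)
      · exact Subgroup.subset_closure (Or.inl (Or.inl hg))
      · obtain ⟨i, j, h, r, _, rfl⟩ := hg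
        exact Subgroup.subset_closure (Or.inl (Or.inr ⟨i, j, h, r, rfl⟩))
      · exact Subgroup.subset_closure (Or.inr hg)
      · obtain ⟨i, j, h, r, _, rfl⟩ := hg
        exact Subgroup.subset_closure (Or.inl (Or.inr ⟨i, j, h, r, rfl⟩))
    -- P normalizes K
    have hnorm : parabolic n R I ≤ Subgroup.normalizer (kerK n R I : Set (Matrix.SpecialLinearGroup (Fin n) R)) := by
      apply (Subgroup.closure_le _).mpr
      rintro g ((hg | hg) | hg)
      · -- diagonal
        apply mem_normalizer_of_conj
        · rintro x ⟨i, j, hij, r, hnc, rfl⟩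
          obtain ⟨c, hc⟩ := diag_mul_elem g hg i j (ne_of_lt hij) r
          have he : g * elemMat i j (ne_of_lt hij) r * g⁻¹ = elemMat i j (ne_of_lt hij) c := by
            rw [hc, mul_inv_cancel_right]
          rw [he]
          exact Subgroup.subset_closure ⟨i, j, hij, c, hnc, rfl⟩
        · rintro x ⟨i, j, hij, r, hnc, rfl⟩
          obtain ⟨c, hc⟩ := diag_mul_elem' g hg i j (ne_of_lt hij) r
          have he : g⁻¹ * elemMat i j (ne_of_lt hij) r * g = elemMat i j (ne_of_lt hij) c := by
            calc g⁻¹ * elemMat i j (ne_of_lt hij) r * g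
                = g⁻¹ * (elemMat i j (ne_of_lt hij) r * g) := mul_assoc _ _ _
              _ = g⁻¹ * (g * elemMat i j (ne_of_lt hij) c) := by rw [← hc]
              _ = elemMat i j (ne_of_lt hij) c := inv_mul_cancel_left _ _
          rw [he]
          exact Subgroup.subset_closure ⟨i, j, hij, c, hnc, rfl⟩
      · -- upper elementary (arbitrary)
        obtain ⟨a, b, hab, s, rfl⟩ := hg
        have hlow : b < a → IConn I b a := fun h => absurd h (lt_asymm hab)
        apply mem_normalizer_of_conj
        · exact conj_elem_mem I a b (ne_of_lt hab) s hlow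
        · intro x hx
          have h := conj_elem_mem I a b (ne_of_lt hab) (-s) hlow x hx
          rw [elemMat_inv, neg_neg] at h
          rw [elemMat_inv]
          exact h
      · -- lower elementary (I-connected)
        obtain ⟨i, j, h, r, hconn, rfl⟩ := hg
        have hlow : i < j → IConn I i j := fun _ => hconn
        apply mem_normalizer_of_conj
        · exact conj_elem_mem I j i (ne_of_gt h) r hlow
        · intro x hx
          have hh := conj_elem_mem I j i (ne_of_gt h) (-r) hlow x hx
          rw [elemMat_inv, neg_neg] at hh
          rw [elemMat_inv]
          exact hh
    have part2 : ∀ p ∈ parabolic n R I, ∀ x ∈ kerK n R I, p * x * p⁻¹ ∈ kerK n R I :=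
      fun p hp x hx => (Subgroup.mem_normalizer_iff.mp (hnorm hp) x).mp hx
    -- K is block-strictly-upper
    have hKbu : kerK n R I ≤ blockUpperSG n R Ext := by
      apply (Subgroup.closure_le _).mpr
      rintro g ⟨i, j, hij, r, hnc, rfl⟩
      have hijv : i.val < j.val := hij
      have hlt : bmap Ext i.val < bmap Ext j.val :=
        bmap_lt_of_not_conn Ext (le_of_lt hijv) (fun hh => hnc (fun k h1 h2 => hh k h1 h2))
      show ∀ u v : Fin n, ¬ bmap Ext u.val < bmap Ext v.val →
        ((elemMat i j (ne_of_lt hij) r : Matrix (Fin n) (Fin n) R) - 1) u v = 0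
      intro u v huv
      have hsub : (elemMat i j (ne_of_lt hij) r : Matrix (Fin n) (Fin n) R) - 1 =
          Matrix.single i j r := by
        rw [elemMat_coe, Matrix.transvection, add_sub_cancel_left]
      rw [hsub]
      by_cases hcase : i = u ∧ j = v
      · exact absurd (hcase.1 ▸ hcase.2 ▸ hlt) huv
      · simp only [Matrix.single, Matrix.of_apply, if_neg hcase]
    -- LE is block-diagonal
    have hLbd : extLevi n R I ≤ blockDiagSG n R Ext := by
      apply (Subgroup.closure_le _).mpr
      have helem : ∀ (i j : Fin n) (hne : i ≠ j) (r : R),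
          bmap Ext i.val = bmap Ext j.val →
          ∀ u v : Fin n, bmap Ext u.val ≠ bmap Ext v.val →
          (elemMat i j hne r : Matrix (Fin n) (Fin n) R) u v = 0 := by
        intro i j hne r heq u v huv
        have huvne : u ≠ v := fun he => huv (by rw [he])
        rw [elemMat_coe, Matrix.transvection, Matrix.add_apply, Matrix.one_apply_ne huvne]
        by_cases hcase : i = u ∧ j = v
        · exact absurd (hcase.1 ▸ hcase.2 ▸ heq) huv
        · simp only [Matrix.single, Matrix.of_apply, if_neg hcase, zero_add]
      rintro g (((hg | hg) | hg) | hg)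
      · exact fun u v huv => hg (fun he => huv (by rw [he]))
      · obtain ⟨i, j, hij, r, hconn, rfl⟩ := hg
        have heq : bmap Ext i.val = bmap Ext j.val :=
          (conn_iff_bmap Ext (le_of_lt (hij : i.val < j.val))).mp
            (fun k h1 h2 => Or.inl (hconn k h1 h2))
        exact helem i j (ne_of_lt hij) r heq
      · obtain ⟨i, j, hij, r, hconn, rfl⟩ := hg
        have heq : bmap Ext i.val = bmap Ext j.val :=
          (conn_iff_bmap Ext (le_of_lt (hij : i.val < j.val))).mp
            (fun k h1 h2 => Or.inl (hconn k h1 h2))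
        exact helem j i (ne_of_gt hij) r heq.symm
      · obtain ⟨i, j, hij, r, hconn, rfl⟩ := hg
        have heq : bmap Ext i.val = bmap Ext j.val :=
          (conn_iff_bmap Ext (le_of_lt (hij : i.val < j.val))).mp
            (fun k h1 h2 => Or.inr (hconn k h1 h2))
        exact helem i j (ne_of_lt hij) r heq
    -- trivial intersection
    have part3 : kerK n R I ⊓ extLevi n R I = ⊥ := by
      rw [Subgroup.eq_bot_iff_forall]
      intro x hx
      obtain ⟨hx1, hx2⟩ := Subgroup.mem_inf.mp hx
      have hbu := hKbu hx1
      have hbd := hLbd hx2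
      apply Subtype.ext
      rw [Matrix.SpecialLinearGroup.coe_one]
      ext u v
      by_cases hcase : bmap Ext u.val = bmap Ext v.val
      · have h0 := hbu u v (by omega)
        rw [Matrix.sub_apply] at h0
        exact sub_eq_zero.mp h0
      · have h0 := hbd u v hcase
        have huvne : u ≠ v := fun he => hcase (by rw [he])
        rw [h0, Matrix.one_apply_ne huvne]
    -- product decomposition
    have part4 : (kerK n R I : Set (Matrix.SpecialLinearGroup (Fin n) R)) *
        (extLevi n R I : Set (Matrix.SpecialLinearGroup (Fin n) R)) =
        (parabolic n R I : Set (Matrix.SpecialLinearGroup (Fin n) R)) := by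
      let Q : Subgroup (Matrix.SpecialLinearGroup (Fin n) R) :=
        { carrier := (kerK n R I : Set (Matrix.SpecialLinearGroup (Fin n) R)) *
            (extLevi n R I : Set (Matrix.SpecialLinearGroup (Fin n) R))
          one_mem' := ⟨1, Subgroup.one_mem _, 1, Subgroup.one_mem _, one_mul 1⟩
          mul_mem' := by
            rintro p q ⟨k1, hk1, l1, hl1, rfl⟩ ⟨k2, hk2, l2, hl2, rfl⟩
            exact ⟨k1 * (l1 * k2 * l1⁻¹),
              mul_mem hk1 (part2 l1 (hLP hl1) k2 hk2),
              l1 * l2, mul_mem hl1 hl2, by group⟩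
          inv_mem' := by
            rintro p ⟨k, hk, l, hl, rfl⟩
            exact ⟨l⁻¹ * k⁻¹ * l⁻¹⁻¹,
              part2 l⁻¹ (hLP (inv_mem hl)) k⁻¹ (inv_mem hk),
              l⁻¹, inv_mem hl, by group⟩ }
      have hPQ : parabolic n R I ≤ Q := by
        apply (Subgroup.closure_le _).mpr
        rintro g ((hg | hg) | hg)
        · show g ∈ (kerK n R I : Set (Matrix.SpecialLinearGroup (Fin n) R)) *
            (extLevi n R I : Set (Matrix.SpecialLinearGroup (Fin n) R))
          exact ⟨1, Subgroup.one_mem _, g,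
            Subgroup.subset_closure (Or.inl (Or.inl (Or.inl hg))), one_mul g⟩
        · obtain ⟨i, j, hij, r, rfl⟩ := hg
          show elemMat i j (ne_of_lt hij) r ∈
            (kerK n R I : Set (Matrix.SpecialLinearGroup (Fin n) R)) *
            (extLevi n R I : Set (Matrix.SpecialLinearGroup (Fin n) R))
          by_cases hconn : IConn Ext i j
          · rcases purity hij hconn with hcI | hcN
            · exact ⟨1, Subgroup.one_mem _, _,
                Subgroup.subset_closure (Or.inl (Or.inl (Or.inr ⟨i, j, hij, r, hcI, rfl⟩))),
                one_mul _⟩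
            · exact ⟨1, Subgroup.one_mem _, _,
                Subgroup.subset_closure (Or.inr ⟨i, j, hij, r, hcN, rfl⟩), one_mul _⟩
          · exact ⟨_, Subgroup.subset_closure ⟨i, j, hij, r, hconn, rfl⟩, 1,
              Subgroup.one_mem _, mul_one _⟩
        · show g ∈ (kerK n R I : Set (Matrix.SpecialLinearGroup (Fin n) R)) *
            (extLevi n R I : Set (Matrix.SpecialLinearGroup (Fin n) R))
          exact ⟨1, Subgroup.one_mem _, g,
            Subgroup.subset_closure (Or.inl (Or.inr hg)), one_mul g⟩
      apply Set.Subset.antisymm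
      · rintro x ⟨k, hk, l, hl, rfl⟩
        exact mul_mem (hKP hk) (hLP hl)
      · exact fun x hx => hPQ hx
    exact ⟨hKP, part2, part3, part4⟩
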